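/- arXiv:2112.01253 — 3 statements merged into one kernel-verified Lean document; each statement's English description precedes it below -/
import Mathlib

section
/- Let V_g, V_q : ℕ → ℝ be nonnegative sequences (incremental storage functions) and let Δx̃ : ℕ → ℝ^{nx}, Δz : ℕ → ℝ^{nz}, Δv : ℕ → ℝ^{nv}, Δw : ℕ → ℝ^{nw} be sequences of vectors. Let Q_xx ∈ ℝ^{nx×nx}, Q_zz ∈ ℝ^{nz×nz}, R_vv ∈ ℝ^{nv×nv}, R_ww ∈ ℝ^{nw×nw}, R̄ ∈ ℝ^{nx×nx}, Q̄ ∈ ℝ^{nv×nv} be symmetric matrices and S_vx ∈ ℝ^{nv×nx}, S_wz ∈ ℝ^{nw×nz}, S̄ ∈ ℝ^{nx×nv} be matrices. Assume: (i) for every t, V_g(t+1) − V_g(t) ≤ Δx̃ₜᵀ Q_xx Δx̃ₜ + Δzₜᵀ Q_zz Δzₜ + 2 Δvₜᵀ S_vx Δx̃ₜ + 2 Δwₜᵀ S_wz Δzₜ + Δvₜᵀ R_vv Δvₜ + Δwₜᵀ R_ww Δwₜ; (ii) for every t, V_q(t+1) − V_q(t) ≤ Δvₜᵀ Q̄ Δvₜ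 + 2 Δx̃ₜᵀ S̄ Δvₜ + Δx̃ₜᵀ R̄ Δx̃ₜ; (iii) the symmetric block matrix M = [[Q_xx + R̄, S_vxᵀ + S̄],[S_vx + S̄ᵀ, R_vv + Q̄]] is negative semidefinite. Then for every t, (V_g + V_q)(t+1) − (V_g + V_q)(t) ≤ Δzₜᵀ Q_zz Δzₜ + 2 Δwₜᵀ S_wz Δzₜ + Δwₜᵀ R_ww Δwₜ. -/
open Matrix

lemma dot_transpose_swap {m n : ℕ} (A : Matrix (Fin m) (Fin n) ℝ)
    (x : Fin n → ℝ) (v : Fin m → ℝ) :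
    x ⬝ᵥ (Aᵀ *ᵥ v) = v ⬝ᵥ (A *ᵥ x) := by
  rw [mulVec_transpose, dotProduct_comm, dotProduct_mulVec]

lemma block_quad_nonpos {nx nv : ℕ} (A : Matrix (Fin nx) (Fin nx) ℝ)
    (B : Matrix (Fin nx) (Fin nv) ℝ)
    (C : Matrix (Fin nv) (Fin nx) ℝ) (D : Matrix (Fin nv) (Fin nv) ℝ)
    (h : (-(fromBlocks A B C D)).PosSemidef) (x : Fin nx → ℝ) (v : Fin nv → ℝ) :
    x ⬝ᵥ (A *ᵥ x) + x ⬝ᵥ (B *ᵥ v) + v ⬝ᵥ (C *ᵥ x) + v ⬝ᵥ (D *ᵥ v) ≤ 0 := by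
  have h2 := h.dotProduct_mulVec_nonneg (Sum.elim x v)
  rw [neg_mulVec, fromBlocks_mulVec, star_trivial, dotProduct_neg, sumElim_dotProduct_sumElim,
    dotProduct_add, dotProduct_add, Sum.elim_comp_inl, Sum.elim_comp_inr] at h2
  linarith

/-- Dissipation-combination step of Theorem 1 (Youla-REN closed-loop stability):
adding the per-step dissipation inequalities of the plant-difference system `G_Δ`
and the Youla parameter `Q_θ`, and using negative semidefiniteness of the coupling
block matrix `M`, yields the closed-loop per-step dissipation inequality. -/
theorem dissipation_combination
    {nx nz nv nw : ℕ}
    (Vg Vq : ℕ → ℝ)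
    (hVg : ∀ t, 0 ≤ Vg t) (hVq : ∀ t, 0 ≤ Vq t)
    (Δx : ℕ → Fin nx → ℝ) (Δz : ℕ → Fin nz → ℝ)
    (Δv : ℕ → Fin nv → ℝ) (Δw : ℕ → Fin nw → ℝ)
    (Qxx : Matrix (Fin nx) (Fin nx) ℝ) (Qzz : Matrix (Fin nz) (Fin nz) ℝ)
    (Rvv : Matrix (Fin nv) (Fin nv) ℝ) (Rww : Matrix (Fin nw) (Fin nw) ℝ)
    (Rbar : Matrix (Fin nx) (Fin nx) ℝ) (Qbar : Matrix (Fin nv) (Fin nv) ℝ)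
    (Svx : Matrix (Fin nv) (Fin nx) ℝ) (Swz : Matrix (Fin nw) (Fin nz) ℝ)
    (Sbar : Matrix (Fin nx) (Fin nv) ℝ)
    (hQxx : Qxx.IsSymm) (hQzz : Qzz.IsSymm) (hRvv : Rvv.IsSymm)
    (hRww : Rww.IsSymm) (hRbar : Rbar.IsSymm) (hQbar : Qbar.IsSymm)
    (hg : ∀ t, Vg (t + 1) - Vg t ≤
      Δx t ⬝ᵥ (Qxx *ᵥ Δx t) + Δz t ⬝ᵥ (Qzz *ᵥ Δz t)
        + 2 * (Δv t ⬝ᵥ (Svx *ᵥ Δx t)) + 2 * (Δw t ⬝ᵥ (Swz *ᵥ Δz t))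
        + Δv t ⬝ᵥ (Rvv *ᵥ Δv t) + Δw t ⬝ᵥ (Rww *ᵥ Δw t))
    (hq : ∀ t, Vq (t + 1) - Vq t ≤
      Δv t ⬝ᵥ (Qbar *ᵥ Δv t) + 2 * (Δx t ⬝ᵥ (Sbar *ᵥ Δv t))
        + Δx t ⬝ᵥ (Rbar *ᵥ Δx t))
    (hM : (-(Matrix.fromBlocks (Qxx + Rbar) (Svxᵀ + Sbar)
        (Svx + Sbarᵀ) (Rvv + Qbar))).PosSemidef) :
    ∀ t, (Vg (t + 1) + Vq (t + 1)) - (Vg t + Vq t) ≤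
      Δz t ⬝ᵥ (Qzz *ᵥ Δz t) + 2 * (Δw t ⬝ᵥ (Swz *ᵥ Δz t))
        + Δw t ⬝ᵥ (Rww *ᵥ Δw t) := by
  intro t
  have hquad := block_quad_nonpos _ _ _ _ hM (Δx t) (Δv t)
  rw [add_mulVec, add_mulVec, add_mulVec, add_mulVec,
    dotProduct_add, dotProduct_add, dotProduct_add, dotProduct_add,
    dot_transpose_swap Svx, dot_transpose_swap Sbar] at hquad
  have h1 := hg t
  have h2 := hq t
  linarith
end

section
/- Under the hypotheses of the dissipation-combination result — nonnegative sequences V_g, V_q : ℕ → ℝ, vector sequences Δx̃, Δz, Δv, Δw, symmetric matrices Q_xx, Q_zz, R_vv, R_ww, R̄, Q̄ and matrices S_vx, S_wz, S̄ satisfying the two per-step dissipation inequalities and negative semidefiniteness of M = [[Q_xx + R̄, S_vxᵀ + S̄],[S_vx + S̄ᵀ, R_vv + Q̄]] — assume additionally that V_g(0) = 0 and V_q(0) = 0. Then for every T ∈ ℕ, ∑_{t=0}^{T} ( Δzₜᵀ Q_zz Δzₜ + 2 Δwₜᵀ S_wz Δzₜ + Δwₜᵀ R_ww Δwₜ ) ≥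 0. -/
open Matrix Finset

/-- Summed (integral) form of the closed-loop incremental IQC in Theorem 1:
telescoping the combined per-step dissipation inequality with zero initial storage
shows the closed-loop supply over any horizon is nonnegative. -/
theorem closed_loop_incremental_IQC
    {nx nz nv nw : ℕ}
    (Vg Vq : ℕ → ℝ)
    (hVg : ∀ t, 0 ≤ Vg t) (hVq : ∀ t, 0 ≤ Vq t)
    (hVg0 : Vg 0 = 0) (hVq0 : Vq 0 = 0)
    (Δx : ℕ → Fin nx → ℝ) (Δz : ℕ → Fin nz → ℝ)
    (Δv : ℕ → Fin nv → ℝ) (Δw : ℕ → Fin nw → ℝ)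
    (Qxx : Matrix (Fin nx) (Fin nx) ℝ) (Qzz : Matrix (Fin nz) (Fin nz) ℝ)
    (Rvv : Matrix (Fin nv) (Fin nv) ℝ) (Rww : Matrix (Fin nw) (Fin nw) ℝ)
    (Rbar : Matrix (Fin nx) (Fin nx) ℝ) (Qbar : Matrix (Fin nv) (Fin nv) ℝ)
    (Svx : Matrix (Fin nv) (Fin nx) ℝ) (Swz : Matrix (Fin nw) (Fin nz) ℝ)
    (Sbar : Matrix (Fin nx) (Fin nv) ℝ)
    (hQxx : Qxx.IsSymm) (hQzz : Qzz.IsSymm) (hRvv : Rvv.IsSymm)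
    (hRww : Rww.IsSymm) (hRbar : Rbar.IsSymm) (hQbar : Qbar.IsSymm)
    (hg : ∀ t, Vg (t + 1) - Vg t ≤
      Δx t ⬝ᵥ (Qxx *ᵥ Δx t) + Δz t ⬝ᵥ (Qzz *ᵥ Δz t)
        + 2 * (Δv t ⬝ᵥ (Svx *ᵥ Δx t)) + 2 * (Δw t ⬝ᵥ (Swz *ᵥ Δz t))
        + Δv t ⬝ᵥ (Rvv *ᵥ Δv t) + Δw t ⬝ᵥ (Rww *ᵥ Δw t))
    (hq : ∀ t, Vq (t + 1) - Vq t ≤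
      Δv t ⬝ᵥ (Qbar *ᵥ Δv t) + 2 * (Δx t ⬝ᵥ (Sbar *ᵥ Δv t))
        + Δx t ⬝ᵥ (Rbar *ᵥ Δx t))
    (hM : (-(Matrix.fromBlocks (Qxx + Rbar) (Svxᵀ + Sbar)
        (Svx + Sbarᵀ) (Rvv + Qbar))).PosSemidef) :
    ∀ T : ℕ, 0 ≤ ∑ t ∈ Finset.range (T + 1),
      (Δz t ⬝ᵥ (Qzz *ᵥ Δz t) + 2 * (Δw t ⬝ᵥ (Swz *ᵥ Δz t))
        + Δw t ⬝ᵥ (Rww *ᵥ Δw t)) := by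
  intro T
  -- per-step quadratic form in (Δx, Δv) is ≤ 0
  have key : ∀ t,
      Δx t ⬝ᵥ (Qxx *ᵥ Δx t) + 2 * (Δv t ⬝ᵥ (Svx *ᵥ Δx t))
        + Δv t ⬝ᵥ (Rvv *ᵥ Δv t)
      + (Δv t ⬝ᵥ (Qbar *ᵥ Δv t) + 2 * (Δx t ⬝ᵥ (Sbar *ᵥ Δv t))
        + Δx t ⬝ᵥ (Rbar *ᵥ Δx t)) ≤ 0 := by
    intro t
    have h := hM.dotProduct_mulVec_nonneg (Sum.elim (Δx t) (Δv t))
    have htr : Δx t ⬝ᵥ (Svxᵀ *ᵥ Δv t) = Δv t ⬝ᵥ (Svx *ᵥ Δx t) := by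
      rw [dotProduct_mulVec, vecMul_transpose, dotProduct_comm]
    have htr2 : Δv t ⬝ᵥ (Sbarᵀ *ᵥ Δx t) = Δx t ⬝ᵥ (Sbar *ᵥ Δv t) := by
      rw [dotProduct_mulVec, vecMul_transpose, dotProduct_comm]
    simp only [star_trivial, neg_mulVec, dotProduct_neg, fromBlocks_mulVec,
      sumElim_dotProduct_sumElim, Sum.elim_comp_inl, Sum.elim_comp_inr,
      add_mulVec, dotProduct_add] at h
    rw [htr, htr2] at h
    linarith
  have step : ∀ t, Vg (t + 1) + Vq (t + 1) - (Vg t + Vq t) ≤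
      Δz t ⬝ᵥ (Qzz *ᵥ Δz t) + 2 * (Δw t ⬝ᵥ (Swz *ᵥ Δz t))
        + Δw t ⬝ᵥ (Rww *ᵥ Δw t) := by
    intro t
    have h1 := hg t
    have h2 := hq t
    have h3 := key t
    linarith
  have tele : Vg (T + 1) + Vq (T + 1) - (Vg 0 + Vq 0) ≤
      ∑ t ∈ Finset.range (T + 1),
        (Δz t ⬝ᵥ (Qzz *ᵥ Δz t) + 2 * (Δw t ⬝ᵥ (Swz *ᵥ Δz t))
          + Δw t ⬝ᵥ (Rww *ᵥ Δw t)) := by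
    calc Vg (T + 1) + Vq (T + 1) - (Vg 0 + Vq 0)
        = ∑ t ∈ Finset.range (T + 1),
            (Vg (t + 1) + Vq (t + 1) - (Vg t + Vq t)) := by
          rw [Finset.sum_range_sub (fun t => Vg t + Vq t)]
      _ ≤ _ := Finset.sum_le_sum fun t _ => step t
  have := hVg (T + 1); have := hVq (T + 1)
  rw [hVg0, hVq0] at tele
  linarith
end

section
/- Let A ∈ ℝ^{n×n}, B ∈ ℝ^{n×m}, Y ∈ ℝ^{m×n}, let X ∈ ℝ^{n×n} be symmetric positive definite and β > 0. Define W := XAᵀ + AX + BY + YᵀBᵀ and suppose the symmetric block matrix [[W, B, X],[Bᵀ, −β·I_m, 0],[X, 0, −β·I_n]] is negative semidefinite. Then, with A_cl := A + B·Y·X⁻¹ and P := X⁻¹, the matrix A_clᵀ P + P A_cl + (1/β)·P B Bᵀ P + (1/β)·I_n is negative semidefinite. -/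
open Matrix

/-- Content of the first LMI in the robust controller synthesis problem (12): via
Schur complements and congruence with `X⁻¹`, it yields the bounded-real-type Riccati
inequality for the closed-loop matrix `A_cl = A + BYX⁻¹` with `P = X⁻¹`. -/
theorem synthesis_lmi_to_riccati
    {n m : ℕ}
    (A : Matrix (Fin n) (Fin n) ℝ) (B : Matrix (Fin n) (Fin m) ℝ)
    (Y : Matrix (Fin m) (Fin n) ℝ)
    (X : Matrix (Fin n) (Fin n) ℝ) (hX : X.PosDef) (hXsymm : X.IsSymm)
    (β : ℝ) (hβ : 0 < β)
    (hLMI : (-(Matrix.fromBlocks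
        (X * Aᵀ + A * X + B * Y + Yᵀ * Bᵀ)
        (Matrix.fromCols B X)
        (Matrix.fromRows Bᵀ X)
        (Matrix.fromBlocks ((-β) • (1 : Matrix (Fin m) (Fin m) ℝ)) 0
          0 ((-β) • (1 : Matrix (Fin n) (Fin n) ℝ))))).PosSemidef) :
    (-((A + B * Y * X⁻¹)ᵀ * X⁻¹ + X⁻¹ * (A + B * Y * X⁻¹)
        + (1 / β) • (X⁻¹ * B * Bᵀ * X⁻¹)
        + (1 / β) • (1 : Matrix (Fin n) (Fin n) ℝ))).PosSemidef := by
  have hXT : Xᵀ = X := hXsymm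
  have hXu : IsUnit X := hX.isUnit
  have hXinv : X⁻¹ * X = 1 := nonsing_inv_mul X ((isUnit_iff_isUnit_det X).mp hXu)
  have hXinv' : X * X⁻¹ = 1 := mul_nonsing_inv X ((isUnit_iff_isUnit_det X).mp hXu)
  have hXiT : (X⁻¹)ᵀ = X⁻¹ := by rw [transpose_nonsing_inv, hXT]
  -- the D block is β • 1
  set W := X * Aᵀ + A * X + B * Y + Yᵀ * Bᵀ with hW
  set C := Matrix.fromCols B X with hC
  have hD : (Matrix.fromBlocks ((-β) • (1 : Matrix (Fin m) (Fin m) ℝ)) 0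
          0 ((-β) • (1 : Matrix (Fin n) (Fin n) ℝ)))
      = (-β) • (1 : Matrix (Fin m ⊕ Fin n) (Fin m ⊕ Fin n) ℝ) := by
    rw [← fromBlocks_one, fromBlocks_smul]
    simp
  have hCH : Matrix.fromRows Bᵀ X = Cᴴ := by
    rw [hC, conjTranspose_eq_transpose_of_trivial, transpose_fromCols, hXT]
  rw [hD, hCH] at hLMI
  have hneg : -(Matrix.fromBlocks W C Cᴴ ((-β) • 1))
      = Matrix.fromBlocks (-W) (-C) (-C)ᴴ (β • 1) := by
    rw [fromBlocks_neg, conjTranspose_neg, neg_smul, neg_neg]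
  rw [hneg] at hLMI
  have hβ1 : ((β • 1 : Matrix (Fin m ⊕ Fin n) (Fin m ⊕ Fin n) ℝ)).PosDef := by
    have : (β • 1 : Matrix (Fin m ⊕ Fin n) (Fin m ⊕ Fin n) ℝ)
        = Matrix.diagonal (fun _ => β) := by
      ext i j
      rcases eq_or_ne i j with h | h <;>
        simp [Matrix.one_apply, Matrix.diagonal_apply, h]
    rw [this]
    exact PosDef.diagonal (fun _ => hβ)
  have := hβ1.isUnit.invertible
  rw [PosDef.fromBlocks₂₂ _ _ hβ1] at hLMI
  -- simplify the Schur complement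
  have hinv : ((β • 1 : Matrix (Fin m ⊕ Fin n) (Fin m ⊕ Fin n) ℝ))⁻¹ = β⁻¹ • 1 := by
    apply inv_eq_right_inv
    rw [smul_mul_smul_comm, mul_one, mul_inv_cancel₀ hβ.ne', one_smul]
  rw [hinv] at hLMI
  have hCC : (-C) * (β⁻¹ • (1 : Matrix (Fin m ⊕ Fin n) (Fin m ⊕ Fin n) ℝ)) * (-C)ᴴ
      = β⁻¹ • (B * Bᵀ + X * X) := by
    simp only [conjTranspose_neg, Matrix.neg_mul, Matrix.mul_neg, neg_neg]
    rw [Matrix.mul_smul, Matrix.mul_one, Matrix.smul_mul, ← hCH, hC,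
      fromCols_mul_fromRows]
  rw [hCC] at hLMI
  have hS : (-(W + β⁻¹ • (B * Bᵀ + X * X))).PosSemidef := by
    rwa [neg_add, ← sub_eq_add_neg]
  -- congruence with X⁻¹
  have hcong := hS.mul_mul_conjTranspose_same X⁻¹
  have hfin : X⁻¹ * -(W + β⁻¹ • (B * Bᵀ + X * X)) * (X⁻¹)ᴴ
      = -((A + B * Y * X⁻¹)ᵀ * X⁻¹ + X⁻¹ * (A + B * Y * X⁻¹)
        + (1 / β) • (X⁻¹ * B * Bᵀ * X⁻¹)
        + (1 / β) • (1 : Matrix (Fin n) (Fin n) ℝ)) := by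
    have cl : ∀ (M : Matrix (Fin n) (Fin n) ℝ), X⁻¹ * (X * M) = M := fun M => by
      rw [← Matrix.mul_assoc, hXinv, Matrix.one_mul]
    rw [conjTranspose_eq_transpose_of_trivial, hXiT, hW, one_div]
    rw [Matrix.mul_neg, Matrix.neg_mul, neg_inj]
    simp only [transpose_add, transpose_mul, transpose_transpose, hXiT, hXT,
      Matrix.mul_add, Matrix.add_mul, Matrix.smul_mul, Matrix.mul_smul, smul_add,
      Matrix.mul_assoc, cl, hXinv', Matrix.mul_one, hXinv]
    abel
  rw [hfin] at hcong
  exact hcong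
end
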